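/- Let p be a prime. For every s ≥ 1, the equality N_{p^s − 1}(ξ) = −ζ_s holds in F_p[ξ_1, ξ_2, …]. -/

import Mathlib

open MvPolynomial

/-- The Newton polynomials `N_n ∈ R[t_1, …, t_n]`: `N_1(t) = t_1` and
`N_n(t) = t_1 N_{n−1}(t) − t_2 N_{n−2}(t) + ⋯ + (−1)^{n−2} t_{n−1} N_1(t) + (−1)^{n−1} n t_n`. -/
noncomputable def newton (R : Type*) [CommRing R] : ℕ → MvPolynomial ℕ R
  | 0 => 0
  | (n+1) =>
      (∑ i ∈ Finset.range n, (-1 : MvPolynomial ℕ R)^i * X (i+1) * newton R (n - i))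
      + (-1 : MvPolynomial ℕ R)^n * ((n+1 : ℕ) : MvPolynomial ℕ R) * X (n+1)
  decreasing_by exact Nat.lt_succ_of_le (Nat.sub_le n i)

open Classical in
/-- The substitution `t_m ↦ ξ_r` if `m = p^r − 1` for some `r ≥ 1`, and `t_m ↦ 0`
otherwise; the variable `ξ_r` of `F_p[ξ_1, ξ_2, …]` is `X r`. -/
noncomputable def xiSub (p : ℕ) (m : ℕ) : MvPolynomial ℕ (ZMod p) :=
  if h : ∃ r, 1 ≤ r ∧ m = p ^ r - 1 then X h.choose else 0

/-- `N_n(ξ) ∈ F_p[ξ_1, ξ_2, …]`. -/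
noncomputable def Nxi (p n : ℕ) : MvPolynomial ℕ (ZMod p) :=
  aeval (xiSub p) (newton (ZMod p) n)

/-- The conjugates `ζ_s ∈ F_p[ξ_1, ξ_2, …]`: `ζ_0 = 1` and
`ζ_s = −(ζ_{s−1} ξ_1^{p^{s−1}} + ζ_{s−2} ξ_2^{p^{s−2}} + ⋯ + ζ_1 ξ_{s−1}^p + ξ_s)`. -/
noncomputable def zeta (p : ℕ) : ℕ → MvPolynomial ℕ (ZMod p)
  | 0 => 1
  | (s+1) => - ∑ i ∈ Finset.range (s+1), zeta p (s - i) * (X (i+1))^(p^(s-i))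
  decreasing_by omega


noncomputable section NewtonAuxGeneral
open Finset
variable {R : Type*} [CommRing R] {p : ℕ}

lemma charP_powerSeries [CharP R p] : CharP (PowerSeries R) p := by
  have hinj : Function.Injective (PowerSeries.C (R := R)) := by
    intro a b hab
    have := congrArg (PowerSeries.constantCoeff) hab
    simpa using this
  exact charP_of_injective_ringHom hinj p

/-- coefficient of the `p`-th power of a power series in char `p`. -/
lemma coeff_pow_char [CharP R p] (hp : p.Prime) (f : PowerSeries R) (m : ℕ) :
    PowerSeries.coeff m (f ^ p) =
      if p ∣ m then (PowerSeries.coeff (m / p) f) ^ p else 0 := by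
  haveI : Fact p.Prime := ⟨hp⟩
  haveI : CharP (PowerSeries R) p := charP_powerSeries
  -- truncate
  set P : PowerSeries R := ∑ i ∈ range (m+1), PowerSeries.C (PowerSeries.coeff i f) * PowerSeries.X ^ i with hP
  have hPcoeff : ∀ k ≤ m, PowerSeries.coeff k P = PowerSeries.coeff k f := by
    intro k hk
    rw [hP, map_sum]
    rw [Finset.sum_eq_single k]
    · simp
    · intro b _ hbk; simp [PowerSeries.coeff_X_pow, Ne.symm hbk]
    · intro h; exact absurd (mem_range.2 (Nat.lt_succ_of_le hk)) h
  have hker : ∀ k ≤ m, PowerSeries.coeff k (f - P) = 0 := by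
    intro k hk; rw [map_sub, hPcoeff k hk, sub_self]
  have hfp : PowerSeries.coeff m (f ^ p) = PowerSeries.coeff m (P ^ p) := by
    have hsplit : f ^ p = P ^ p + (f - P) ^ p := by
      rw [← add_pow_char]; ring_nf
    rw [hsplit, map_add]
    have hz : PowerSeries.coeff m ((f - P) ^ p) = 0 := by
      have hp0 := hp.pos
      have hp1 : p = 1 + (p - 1) := by omega
      rw [hp1, pow_add, pow_one, PowerSeries.coeff_mul]
      apply Finset.sum_eq_zero
      intro x hx
      rw [Finset.HasAntidiagonal.mem_antidiagonal] at hx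
      rw [hker x.1 (by omega), zero_mul]
    rw [hz, add_zero]
  rw [hfp, hP, sum_pow_char]
  have hterm : ∀ i, (PowerSeries.C (PowerSeries.coeff i f) * PowerSeries.X ^ i) ^ p
      = PowerSeries.C ((PowerSeries.coeff i f) ^ p) * PowerSeries.X ^ (p * i) := by
    intro i; rw [mul_pow, ← pow_mul, map_pow, mul_comm i p]
  simp_rw [hterm]
  rw [map_sum]
  by_cases hdvd : p ∣ m
  · obtain ⟨c, rfl⟩ := hdvd
    rw [if_pos ⟨c, rfl⟩, Finset.sum_eq_single c]
    · rw [Nat.mul_div_cancel_left _ hp.pos, PowerSeries.coeff_C_mul,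
        PowerSeries.coeff_X_pow, if_pos rfl, mul_one]
    · intro b _ hbc
      rw [PowerSeries.coeff_C_mul, PowerSeries.coeff_X_pow, if_neg, mul_zero]
      exact fun h => hbc (Nat.eq_of_mul_eq_mul_left hp.pos h.symm)
    · intro h
      exact absurd (mem_range.2 (by nlinarith [hp.two_le, Nat.lt_irrefl c] : c < p * c + 1)) h
  · rw [if_neg hdvd]
    apply Finset.sum_eq_zero
    intro i _
    rw [PowerSeries.coeff_C_mul, PowerSeries.coeff_X_pow, if_neg, mul_zero]
    exact fun h => hdvd ⟨i, h⟩

end NewtonAuxGeneral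

noncomputable section NewtonAux
open Finset

/-- `ξ_r` with the convention `ξ_0 = 1`. -/
def xiv (p : ℕ) : ℕ → MvPolynomial ℕ (ZMod p)
  | 0 => 1
  | (r+1) => X (r+1)

/-- coefficient of `x^m` in `E(x) = 1 + ξ_1 x^{p-1} + ξ_2 x^{p^2-1} + ⋯`. -/
def coefE (p : ℕ) (m : ℕ) : MvPolynomial ℕ (ZMod p) :=
  if m + 1 = p ^ (Nat.log p (m+1)) then xiv p (Nat.log p (m+1)) else 0

def Eser (p : ℕ) : PowerSeries (MvPolynomial ℕ (ZMod p)) := PowerSeries.mk (coefE p)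

def Us (p : ℕ) : PowerSeries (MvPolynomial ℕ (ZMod p)) := PowerSeries.invOfUnit (Eser p) 1

def u (p : ℕ) (n : ℕ) : MvPolynomial ℕ (ZMod p) := PowerSeries.coeff n (Us p)

variable {p : ℕ}

lemma coefE_zero : coefE p 0 = 1 := by
  simp [coefE, Nat.log_one_right, xiv]

lemma coefE_pow_sub_one (hp : p.Prime) (r : ℕ) : coefE p (p ^ r - 1) = xiv p r := by
  rcases Nat.eq_zero_or_pos r with rfl | hr
  · simpa [xiv] using coefE_zero
  · have h1 : 1 ≤ p ^ r := Nat.one_le_pow _ _ hp.pos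
    have h : p ^ r - 1 + 1 = p ^ r := by omega
    rw [coefE, h, Nat.log_pow hp.one_lt, if_pos rfl]

lemma coefE_eq_zero {m : ℕ} (h : ∀ r, m + 1 ≠ p ^ r) : coefE p m = 0 := by
  rw [coefE, if_neg (h _)]

/-- if `coefE p m ≠ 0` then `m+1` is a power of `p`. -/
lemma exists_of_coefE_ne_zero {m : ℕ} (h : coefE p m ≠ 0) : ∃ r, m + 1 = p ^ r := by
  by_contra hc
  push_neg at hc
  exact h (coefE_eq_zero hc)

lemma constantCoeff_Eser : PowerSeries.constantCoeff (Eser p) = 1 := by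
  simpa [Eser] using coefE_zero (p := p)

lemma Eser_mul_Us : Eser p * Us p = 1 :=
  PowerSeries.mul_invOfUnit _ 1 (by simpa using constantCoeff_Eser (p := p))

lemma u_zero : u p 0 = 1 := by
  have := congrArg (PowerSeries.coeff 0) (Eser_mul_Us (p := p))
  rw [PowerSeries.coeff_zero_eq_constantCoeff, map_mul] at this
  simpa [u, PowerSeries.coeff_zero_eq_constantCoeff, constantCoeff_Eser] using this

/-- The basic recursion for `u`. -/
lemma u_rec (n : ℕ) :
    ∑ k ∈ range (n+1), coefE p k * u p (n - k) = if n = 0 then 1 else 0 := by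
  have := congrArg (PowerSeries.coeff n) (Eser_mul_Us (p := p))
  rw [PowerSeries.coeff_mul, PowerSeries.coeff_one,
    Finset.Nat.sum_antidiagonal_eq_sum_range_succ_mk] at this
  simpa [Eser, u] using this



variable {p : ℕ}

lemma exists_of_coeff_Epow (hp : p.Prime) (k : ℕ) : ∀ m : ℕ, m ≠ 0 →
    PowerSeries.coeff m (Eser p ^ k) ≠ 0 → ∃ c, 1 ≤ c ∧ c ≤ k ∧ p ∣ (m + c) := by
  induction k with
  | zero =>
    intro m hm h
    rw [pow_zero, PowerSeries.coeff_one, if_neg hm] at h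
    exact absurd rfl h
  | succ k ih =>
    intro m hm h
    rw [pow_succ, PowerSeries.coeff_mul] at h
    obtain ⟨⟨a, b⟩, hab, hne⟩ := Finset.exists_ne_zero_of_sum_ne_zero h
    rw [Finset.HasAntidiagonal.mem_antidiagonal] at hab
    have ha : PowerSeries.coeff a (Eser p ^ k) ≠ 0 := fun h0 => hne (by rw [h0, zero_mul])
    have hb : coefE p b ≠ 0 := by
      intro h0
      apply hne
      have : PowerSeries.coeff b (Eser p) = 0 := by simpa [Eser] using h0
      rw [this, mul_zero]
    rcases Nat.eq_zero_or_pos b with rfl | hbpos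
    · have ham : a = m := by omega
      obtain ⟨c, h1, h2, h3⟩ := ih a (ham ▸ hm) ha
      exact ⟨c, h1, h2.trans (Nat.le_succ k), by rwa [← ham]⟩
    · obtain ⟨r, hr⟩ := exists_of_coefE_ne_zero hb
      have hrpos : 1 ≤ r := by
        rcases Nat.eq_zero_or_pos r with rfl | h; · simp at hr; omega
        · exact h
      have hdvd : p ∣ b + 1 := hr ▸ dvd_pow_self p (by omega)
      rcases Nat.eq_zero_or_pos a with rfl | hapos
      · exact ⟨1, le_refl 1, by omega, by simpa [← hab] using hdvd⟩
      · obtain ⟨c, h1, h2, h3⟩ := ih a (by omega) ha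
        refine ⟨c + 1, by omega, by omega, ?_⟩
        have : m + (c + 1) = (a + c) + (b + 1) := by omega
        rw [this]
        exact Nat.dvd_add h3 hdvd

lemma coeff_Epow_vanish (hp : p.Prime) {j : ℕ} (hj : j ≠ 0) :
    PowerSeries.coeff (p * j) (Eser p ^ (p - 1)) = 0 := by
  by_contra h
  obtain ⟨c, h1, h2, h3⟩ := exists_of_coeff_Epow hp (p - 1) (p * j)
    (by have h0 := hp.pos; exact Nat.mul_ne_zero (by omega) hj) h
  have : p ∣ c := (Nat.dvd_add_right ⟨j, rfl⟩).mp h3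
  have := Nat.le_of_dvd (by omega) this
  omega

lemma u_pmul (hp : p.Prime) (n : ℕ) : u p (p * n) = (u p n) ^ p := by
  haveI : Fact p.Prime := ⟨hp⟩
  have h2 : (p - 1) + 1 = p := by have := hp.pos; omega
  have key : Eser p ^ (p - 1) * Us p ^ p = Us p := by
    calc Eser p ^ (p - 1) * Us p ^ p
        = Eser p ^ (p - 1) * Us p ^ p * (Eser p * Us p) := by rw [Eser_mul_Us, mul_one]
      _ = (Eser p ^ (p - 1) * Eser p) * Us p ^ p * Us p := by ring
      _ = (Eser p * Us p) ^ p * Us p := by rw [← pow_succ, h2, mul_pow]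
      _ = Us p := by rw [Eser_mul_Us, one_pow, one_mul]
  have := congrArg (PowerSeries.coeff (p * n)) key
  rw [PowerSeries.coeff_mul] at this
  rw [u, ← this]
  rw [Finset.sum_eq_single (0, p * n)]
  · rw [PowerSeries.coeff_zero_eq_constantCoeff, map_pow, constantCoeff_Eser, one_pow, one_mul,
      coeff_pow_char hp, if_pos ⟨n, rfl⟩, Nat.mul_div_cancel_left _ hp.pos]
    rfl
  · rintro ⟨a, b⟩ hab hne
    rw [Finset.HasAntidiagonal.mem_antidiagonal] at hab
    have ha : a ≠ 0 := by
      intro h0; apply hne; simp [h0, ← hab]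
    by_cases hdvd : p ∣ b
    · have hpa : p ∣ a := by
        have hd : p ∣ a + b := hab ▸ ⟨n, rfl⟩
        have h2 := Nat.dvd_sub hd hdvd
        simpa using h2
      obtain ⟨j, rfl⟩ := hpa
      rw [coeff_Epow_vanish hp (by rintro rfl; omega), zero_mul]
    · rw [coeff_pow_char hp, if_neg hdvd, mul_zero]
  · intro h
    exact absurd (Finset.HasAntidiagonal.mem_antidiagonal.mpr (by omega)) h

lemma u_ppow_mul (hp : p.Prime) (r n : ℕ) : u p (p ^ r * n) = (u p n) ^ (p ^ r) := by
  induction r with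
  | zero => simp
  | succ r ih =>
    have : p ^ (r + 1) * n = p * (p ^ r * n) := by ring
    rw [this, u_pmul hp, ih, ← pow_mul, pow_succ]


/-- triangle reindexing -/
lemma triangle_sum {M : Type*} [AddCommMonoid M] (s : ℕ) (f : ℕ → ℕ → M) :
    ∑ i ∈ range (s+1), ∑ j ∈ range (s+1-i), f i j
      = ∑ m ∈ range (s+1), ∑ i ∈ range (m+1), f i (m-i) := by
  rw [Finset.sum_sigma', Finset.sum_sigma']
  refine Finset.sum_nbij' (fun x => ⟨x.1 + x.2, x.1⟩) (fun x => ⟨x.2, x.1 - x.2⟩) ?_ ?_ ?_ ?_ ?_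
  · rintro ⟨i, j⟩ h
    simp only [Finset.mem_sigma, Finset.mem_range] at h ⊢
    omega
  · rintro ⟨m, i⟩ h
    simp only [Finset.mem_sigma, Finset.mem_range] at h ⊢
    omega
  · rintro ⟨i, j⟩ h
    simp [Nat.add_sub_cancel_left]
  · rintro ⟨m, i⟩ h
    simp only [Finset.mem_sigma, Finset.mem_range] at h
    have hmi : i + (m - i) = m := by omega
    simp [hmi]
  · rintro ⟨i, j⟩ h
    simp [Nat.add_sub_cancel_left]

lemma zeta_B (hp : p.Prime) (m : ℕ) (hm : 1 ≤ m) :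
    ∑ j ∈ range (m+1), zeta p (m-j) * (xiv p j)^(p^(m-j)) = 0 := by
  obtain ⟨s, rfl⟩ := Nat.exists_eq_add_of_le hm
  rw [Finset.sum_range_succ']
  have h0 : zeta p (1 + s - 0) * (xiv p 0)^(p^(1+s-0)) = zeta p (s+1) := by
    simp [xiv, Nat.add_comm 1 s]
  rw [h0]
  have h1 : ∀ i ∈ range (1 + s), zeta p (1+s-(i+1)) * (xiv p (i+1))^(p^(1+s-(i+1)))
      = zeta p (s-i) * (X (i+1))^(p^(s-i)) := by
    intro i _
    have : 1 + s - (i+1) = s - i := by omega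
    rw [this]; rfl
  rw [Finset.sum_congr rfl h1]
  have : range (1 + s) = range (s + 1) := by rw [Nat.add_comm]
  rw [this, zeta]
  ring

lemma zeta_zero : zeta p 0 = 1 := by rw [zeta]

lemma zeta_A (hp : p.Prime) : ∀ s : ℕ, 1 ≤ s →
    ∑ j ∈ range (s+1), xiv p j * (zeta p (s-j))^(p^j) = 0 := by
  haveI : Fact p.Prime := ⟨hp⟩
  intro s
  induction s using Nat.strong_induction_on with
  | _ s ih =>
  intro hs
  -- the triple sum
  set T : ℕ → ℕ → MvPolynomial ℕ (ZMod p) :=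
    fun i j => zeta p i * (xiv p j)^(p^i) * (zeta p (s-i-j))^(p^(i+j)) with hT
  have way1 : ∑ i ∈ range (s+1), ∑ j ∈ range (s+1-i), T i j
      = ∑ i ∈ range (s+1),
          zeta p i * (∑ j ∈ range (s-i+1), xiv p j * (zeta p (s-i-j))^(p^j))^(p^i) := by
    refine Finset.sum_congr rfl ?_
    intro i hi
    rw [mem_range] at hi
    have h1 : s + 1 - i = s - i + 1 := by omega
    rw [h1, sum_pow_char_pow, Finset.mul_sum]
    refine Finset.sum_congr rfl ?_
    intro j _
    rw [mul_pow, ← pow_mul, ← pow_add, hT]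
    ring_nf
  have way2 : ∑ i ∈ range (s+1), ∑ j ∈ range (s+1-i), T i j
      = ∑ m ∈ range (s+1),
          (∑ j ∈ range (m+1), zeta p (m-j) * (xiv p j)^(p^(m-j))) * (zeta p (s-m))^(p^m) := by
    rw [triangle_sum]
    refine Finset.sum_congr rfl ?_
    intro m hm
    rw [Finset.sum_mul, ← Finset.sum_range_reflect]
    refine Finset.sum_congr rfl ?_
    intro i hi
    rw [mem_range] at hi
    have h1 : m - (m - i) = i := by omega
    have h2 : m + 1 - 1 - i = m - i := by omega
    have h3 : s - (m - i) - i = s - m := by omega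
    have h4 : m - i + i = m := by omega
    rw [h2, h1, hT]
    dsimp only
    rw [h3, h4]
  have hval2 : ∑ m ∈ range (s+1),
      (∑ j ∈ range (m+1), zeta p (m-j) * (xiv p j)^(p^(m-j))) * (zeta p (s-m))^(p^m)
      = zeta p s := by
    rw [Finset.sum_eq_single 0]
    · simp [xiv, zeta_zero]
    · intro m _ hm
      rw [zeta_B hp m (by omega), zero_mul]
    · intro h; exact absurd (mem_range.2 (by omega)) h
  have hval1 : ∑ i ∈ range (s+1),
      zeta p i * (∑ j ∈ range (s-i+1), xiv p j * (zeta p (s-i-j))^(p^j))^(p^i)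
      = (∑ j ∈ range (s+1), xiv p j * (zeta p (s-j))^(p^j)) + zeta p s := by
    have hsplit : range (s+1) = insert 0 (insert s (Finset.Ioo 0 s)) := by
      ext x
      simp only [Finset.mem_insert, Finset.mem_Ioo, Finset.mem_range]
      omega
    conv_lhs => rw [hsplit]
    rw [Finset.sum_insert, Finset.sum_insert]
    · have hmid : ∑ i ∈ Finset.Ioo 0 s,
          zeta p i * (∑ j ∈ range (s-i+1), xiv p j * (zeta p (s-i-j))^(p^j))^(p^i) = 0 := by
        apply Finset.sum_eq_zero
        intro i hi
        rw [Finset.mem_Ioo] at hi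
        rw [ih (s-i) (by omega) (by omega), zero_pow (pow_ne_zero _ (by have := hp.pos; omega)),
          mul_zero]
      rw [hmid, add_zero]
      have hss : s - s = 0 := by omega
      have hA0 : (∑ j ∈ range (s - s + 1), xiv p j * zeta p (s - s - j) ^ p ^ j) = 1 := by
        rw [hss]
        simp [xiv, zeta_zero]
      rw [hA0, one_pow, mul_one]
      simp only [Nat.sub_zero, pow_zero, pow_one, zeta_zero, one_mul]
    · simp only [Finset.mem_Ioo]
      omega
    · simp only [Finset.mem_insert, Finset.mem_Ioo]
      omega
  have hfin : (∑ j ∈ range (s+1), xiv p j * (zeta p (s-j))^(p^j)) + zeta p s = zeta p s := by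
    rw [← hval1, ← way1, way2, hval2]
  exact add_right_cancel (hfin.trans (zero_add (zeta p s)).symm)


lemma u_zeta (hp : p.Prime) : ∀ s : ℕ, u p (p ^ s - 1) = zeta p s := by
  intro s
  induction s using Nat.strong_induction_on with
  | _ s ih =>
  rcases Nat.eq_zero_or_pos s with rfl | hs
  · simpa [u_zero] using zeta_zero.symm
  have hp1 : 1 < p := hp.one_lt
  have hps : p ≤ p ^ s := Nat.le_self_pow (by omega) p
  have hrec := u_rec (p := p) (p ^ s - 1)
  rw [if_neg (by omega)] at hrec
  have hrange : p ^ s - 1 + 1 = p ^ s := by omega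
  rw [hrange] at hrec
  -- restrict the sum to the support
  have hsub : ((range (s+1)).image (fun r => p ^ r - 1)) ⊆ range (p ^ s) := by
    intro x hx
    rw [Finset.mem_image] at hx
    obtain ⟨r, hr, rfl⟩ := hx
    rw [mem_range] at hr ⊢
    have : p ^ r ≤ p ^ s := Nat.pow_le_pow_right (by omega) (by omega)
    have : 1 ≤ p ^ r := Nat.one_le_pow _ _ (by omega)
    omega
  have hzero : ∀ x ∈ range (p ^ s), x ∉ ((range (s+1)).image (fun r => p ^ r - 1)) →
      coefE p x * u p (p ^ s - 1 - x) = 0 := by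
    intro x hx hnx
    by_cases hc : coefE p x = 0
    · rw [hc, zero_mul]
    · obtain ⟨r, hr⟩ := exists_of_coefE_ne_zero hc
      exfalso
      apply hnx
      rw [Finset.mem_image]
      refine ⟨r, ?_, by omega⟩
      rw [mem_range] at hx ⊢
      by_contra hrs
      have : p ^ s < p ^ r := Nat.pow_lt_pow_right hp1 (by omega)
      omega
  rw [← Finset.sum_subset hsub hzero] at hrec
  have hinj : Set.InjOn (fun r => p ^ r - 1) (range (s+1)) := by
    intro a _ b _ hab
    simp only at hab
    have ha : 1 ≤ p ^ a := Nat.one_le_pow _ _ (by omega)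
    have hb : 1 ≤ p ^ b := Nat.one_le_pow _ _ (by omega)
    have : p ^ a = p ^ b := by omega
    exact Nat.pow_right_injective (by omega) this
  rw [Finset.sum_image hinj] at hrec
  -- rewrite each term
  have hterm : ∀ r ∈ range (s+1),
      coefE p (p ^ r - 1) * u p (p ^ s - 1 - (p ^ r - 1))
        = xiv p r * u p (p ^ s - p ^ r) := by
    intro r hr
    rw [coefE_pow_sub_one hp]
    congr 2
    have : 1 ≤ p ^ r := Nat.one_le_pow _ _ (by omega)
    omega
  rw [Finset.sum_congr rfl hterm] at hrec
  -- split off r = 0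
  rw [Finset.sum_range_succ'] at hrec
  have h00 : xiv p 0 * u p (p ^ s - p ^ 0) = u p (p ^ s - 1) := by
    simp [xiv, pow_zero]
  rw [h00] at hrec
  have hterm2 : ∀ r ∈ range s,
      xiv p (r+1) * u p (p ^ s - p ^ (r+1))
        = xiv p (r+1) * (zeta p (s - (r+1))) ^ (p ^ (r+1)) := by
    intro r hr
    rw [mem_range] at hr
    have heq : p ^ s - p ^ (r+1) = p ^ (r+1) * (p ^ (s - (r+1)) - 1) := by
      have h1 : p ^ (r+1) * p ^ (s - (r+1)) = p ^ s := by
        rw [← pow_add]; congr 1; omega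
      have h2 : 1 ≤ p ^ (s - (r+1)) := Nat.one_le_pow _ _ (by omega)
      rw [Nat.mul_sub, mul_one, h1]
    rw [heq, u_ppow_mul hp, ih (s - (r+1)) (by omega)]
  rw [Finset.sum_congr rfl hterm2] at hrec
  -- use zeta_A
  have hA := zeta_A hp s hs
  rw [Finset.sum_range_succ'] at hA
  have hA0 : xiv p 0 * zeta p (s - 0) ^ p ^ 0 = zeta p s := by
    simp [xiv]
  rw [hA0] at hA
  have : ∀ r ∈ range s, xiv p (r+1) * (zeta p (s - (r+1))) ^ (p ^ (r+1))
      = xiv p (r+1) * zeta p (s - (r+1)) ^ p ^ (r+1) := fun r _ => rfl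
  -- conclude
  exact add_left_cancel (hrec.trans hA.symm)


lemma xiSub_eq_coefE (hp : p.Prime) {m : ℕ} (hm : 1 ≤ m) : xiSub p m = coefE p m := by
  rw [xiSub]
  split_ifs with h
  · obtain ⟨h1, h2⟩ := h.choose_spec
    obtain ⟨c, hc⟩ : ∃ c, h.choose = c := ⟨h.choose, rfl⟩
    rw [hc] at h1 h2 ⊢
    obtain ⟨r1, rfl⟩ : ∃ r1, c = r1 + 1 := ⟨c - 1, by omega⟩
    rw [h2, coefE_pow_sub_one hp]
    rfl
  · by_cases hc : coefE p m = 0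
    · rw [hc]
    · obtain ⟨r, hr⟩ := exists_of_coefE_ne_zero hc
      have hr1 : 1 ≤ r := by
        rcases Nat.eq_zero_or_pos r with rfl | h'
        · simp at hr; omega
        · exact h'
      exact absurd ⟨r, hr1, by omega⟩ h

lemma natCast_mul_coefE (hp : p.Prime) (m : ℕ) :
    ((m + 2 : ℕ) : MvPolynomial ℕ (ZMod p)) * coefE p (m + 1) = 0 := by
  haveI : Fact p.Prime := ⟨hp⟩
  by_cases hc : coefE p (m + 1) = 0
  · rw [hc, mul_zero]
  · obtain ⟨r, hr⟩ := exists_of_coefE_ne_zero hc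
    have hr1 : 1 ≤ r := by
      rcases Nat.eq_zero_or_pos r with rfl | h'
      · simp at hr
      · exact h'
    have : ((m + 2 : ℕ) : MvPolynomial ℕ (ZMod p)) = 0 := by
      have h2 : (m + 2 : ℕ) = p ^ r := by omega
      rw [h2, Nat.cast_pow]
      rw [show ((p : MvPolynomial ℕ (ZMod p))) = 0 by
        simpa using (CharP.cast_eq_zero (MvPolynomial ℕ (ZMod p)) p)]
      exact zero_pow (by omega)
    rw [this, zero_mul]

lemma Nxi_succ (p : ℕ) (n : ℕ) :
    Nxi p (n+1) = (∑ i ∈ range n, (-1 : MvPolynomial ℕ (ZMod p))^i * xiSub p (i+1) * Nxi p (n-i))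
      + (-1 : MvPolynomial ℕ (ZMod p))^n * ((n+1 : ℕ) : MvPolynomial ℕ (ZMod p)) * xiSub p (n+1) := by
  rw [Nxi, newton]
  rw [map_add, map_sum]
  congr 1
  · refine Finset.sum_congr rfl ?_
    intro i _
    rw [map_mul, map_mul, map_pow, map_neg, map_one, aeval_X]
    rfl
  · rw [map_mul, map_mul, map_pow, map_neg, map_one, aeval_X, map_natCast]

lemma newton_u (hp : p.Prime) : ∀ n : ℕ, Nxi p (n+1) = (-1 : MvPolynomial ℕ (ZMod p))^n * u p (n+1) := by
  intro n
  induction n using Nat.strong_induction_on with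
  | _ n ih =>
  rw [Nxi_succ]
  have hterm : ∀ i ∈ range n,
      (-1 : MvPolynomial ℕ (ZMod p))^i * xiSub p (i+1) * Nxi p (n-i)
        = (-1 : MvPolynomial ℕ (ZMod p))^(n+1) * (coefE p (i+1) * u p (n-i)) := by
    intro i hi
    rw [mem_range] at hi
    have hni : n - i = (n - i - 1) + 1 := by omega
    rw [hni, ih (n - i - 1) (by omega), ← hni, xiSub_eq_coefE hp (by omega)]
    have hpow : (-1 : MvPolynomial ℕ (ZMod p))^i * (-1 : MvPolynomial ℕ (ZMod p))^(n-i-1)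
        = (-1 : MvPolynomial ℕ (ZMod p))^(n-1) := by
      rw [← pow_add]
      congr 1
      omega
    calc (-1 : MvPolynomial ℕ (ZMod p))^i * coefE p (i+1) * ((-1 : MvPolynomial ℕ (ZMod p))^(n-i-1) * u p (n-i))
        = ((-1 : MvPolynomial ℕ (ZMod p))^i * (-1 : MvPolynomial ℕ (ZMod p))^(n-i-1)) * (coefE p (i+1) * u p (n-i)) := by ring
      _ = (-1 : MvPolynomial ℕ (ZMod p))^(n-1) * (coefE p (i+1) * u p (n-i)) := by rw [hpow]
      _ = (-1 : MvPolynomial ℕ (ZMod p))^(n+1) * (coefE p (i+1) * u p (n-i)) := by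
          congr 1
          rcases Nat.eq_zero_or_pos n with rfl | hn
          · omega  -- impossible since i < n
          · have h1 : n + 1 = (n - 1) + 2 := by omega
            rw [h1, pow_add]
            simp
  rw [Finset.sum_congr rfl hterm, ← Finset.mul_sum]
  -- compute the sum via u_rec (n+1)
  have hrec := u_rec (p := p) (n+1)
  rw [if_neg (by omega)] at hrec
  rw [Finset.sum_range_succ'] at hrec
  rw [Finset.sum_range_succ] at hrec
  -- hrec : (∑ i ∈ range n, coefE p (i+1) * u p (n+1-(i+1))) + coefE p (n+1) * u p (n+1-(n+1)) + coefE p 0 * u p (n+1-0) = 0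
  have h0 : coefE p 0 = 1 := by simp [coefE, Nat.log_one_right, xiv]
  have hsimp : ∀ i : ℕ, n + 1 - (i+1) = n - i := fun i => by omega
  simp only [hsimp, Nat.sub_self, Nat.sub_zero] at hrec
  rw [h0, one_mul, u_zero, mul_one] at hrec
  have hsum : ∑ i ∈ range n, coefE p (i+1) * u p (n-i)
      = - u p (n+1) - coefE p (n+1) := by
    have := hrec
    linear_combination this
  rw [hsum, xiSub_eq_coefE hp (by omega)]
  have hchar := natCast_mul_coefE hp n
  have hcast : ((n + 2 : ℕ) : MvPolynomial ℕ (ZMod p)) = ((n+1 : ℕ) : MvPolynomial ℕ (ZMod p)) + 1 := by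
    push_cast; ring
  rw [hcast] at hchar
  have hpow1 : (-1 : MvPolynomial ℕ (ZMod p))^(n+1) = -(-1 : MvPolynomial ℕ (ZMod p))^n := by
    rw [pow_succ]; ring
  rw [hpow1]
  linear_combination ((-1 : MvPolynomial ℕ (ZMod p))^n) * hchar


end NewtonAux

open Finset

/-- For every prime `p` and `s ≥ 1`, `N_{p^s − 1}(ξ) = −ζ_s` in `F_p[ξ_1, ξ_2, …]`. -/
theorem Nxi_p_pow_sub_one (p : ℕ) (hp : p.Prime) (s : ℕ) (hs : 1 ≤ s) :
    Nxi p (p ^ s - 1) = - zeta p s := by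
  haveI : Fact p.Prime := ⟨hp⟩
  have hp1 : 1 < p := hp.one_lt
  have hps : p ≤ p ^ s := Nat.le_self_pow (by omega) p
  have h1 : p ^ s - 1 = (p ^ s - 2) + 1 := by omega
  rw [h1, newton_u hp, ← h1, u_zeta hp s]
  have hsign : (-1 : MvPolynomial ℕ (ZMod p))^(p ^ s - 2) = -1 := by
    rcases hp.eq_two_or_odd' with rfl | hodd
    · have hneg : (-1 : MvPolynomial ℕ (ZMod 2)) = 1 := by
        have : (2 : MvPolynomial ℕ (ZMod 2)) = 0 := by
          simpa using (CharP.cast_eq_zero (MvPolynomial ℕ (ZMod 2)) 2)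
        linear_combination (-1 : MvPolynomial ℕ (ZMod 2)) * this
      rw [hneg, one_pow]
    · have hodds : Odd (p ^ s) := hodd.pow
      obtain ⟨k, hk⟩ := hodds
      have hk1 : 1 ≤ k := by nlinarith
      have : p ^ s - 2 = 2 * (k - 1) + 1 := by omega
      rw [this]
      exact Odd.neg_one_pow ⟨k - 1, by ring⟩
  rw [hsign]
  ring
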